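/- arXiv:1308.0122 — 2 statements merged into one kernel-verified Lean document; each statement's English description precedes it below -/
import Mathlib

section
/- Let L < U be real numbers and define μ : ℝ → ℝ by μ(t) = 0 for t ≤ L, μ(t) = sin(((t − L)/(U − L))·(π/2)) for L ≤ t ≤ U, and μ(t) = 1 for t ≥ U. Then μ is concave on the half-line [L, ∞). -/
open Real

private lemma concaveOn_comp' {s : Set ℝ} {t : Set ℝ} {f g : ℝ → ℝ}
    (hg : ConcaveOn ℝ t g) (hf : ConcaveOn ℝ s f) (hst : ∀ x ∈ s, f x ∈ t)
    (hg' : MonotoneOn g t) : ConcaveOn ℝ s (g ∘ f) :=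
  ⟨hf.1, fun x hx y hy a b ha hb hab =>
    (hg.2 (hst x hx) (hst y hy) ha hb hab).trans <|
      hg' (hg.1 (hst x hx) (hst y hy) ha hb hab)
          (hst _ (hf.1 hx hy ha hb hab)) (hf.2 hx hy ha hb hab)⟩

theorem piecewise_trigonometric_membership_concaveOn_Ici
    (L U : ℝ) (hLU : L < U) (μ : ℝ → ℝ)
    (h1 : ∀ t, t ≤ L → μ t = 0)
    (h2 : ∀ t, L ≤ t → t ≤ U → μ t = Real.sin (((t - L) / (U - L)) * (π / 2)))
    (h3 : ∀ t, U ≤ t → μ t = 1) :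
    ConcaveOn ℝ (Set.Ici L) μ := by
  have hUL : (0:ℝ) < U - L := sub_pos.mpr hLU
  set g : ℝ → ℝ := fun t => min (((t - L) / (U - L)) * (π / 2)) (π / 2) with hg
  -- g is concave on Ici L
  have haff : ConcaveOn ℝ (Set.Ici L) (fun t => ((t - L) / (U - L)) * (π / 2)) := by
    refine ⟨convex_Ici L, fun x _ y _ a b ha hb hab => ?_⟩
    have : ((a * x + b * y - L) / (U - L)) * (π / 2)
        = a * (((x - L) / (U - L)) * (π / 2)) + b * (((y - L) / (U - L)) * (π / 2)) := by
      field_simp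
      linear_combination L * hab
    exact le_of_eq this.symm
  have hgconc : ConcaveOn ℝ (Set.Ici L) g := haff.inf (concaveOn_const _ (convex_Ici L))
  -- g maps Ici L into Icc 0 (π/2) ⊆ Icc 0 π
  have hmaps : ∀ x ∈ Set.Ici L, g x ∈ Set.Icc 0 π := by
    intro x hx
    constructor
    · apply le_min
      · exact mul_nonneg (div_nonneg (by simpa using sub_nonneg.mpr (Set.mem_Ici.mp hx)) hUL.le) (by positivity)
      · positivity
    · exact (min_le_right _ _).trans (by linarith [pi_pos])
  -- sin is monotone on Icc 0 π? No. Monotone on Icc 0 (π/2). Restrict to Icc 0 (π/2).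
  have hmaps2 : ∀ x ∈ Set.Ici L, g x ∈ Set.Icc 0 (π/2) := by
    intro x hx
    exact ⟨(hmaps x hx).1, min_le_right _ _⟩
  have hsin : ConcaveOn ℝ (Set.Icc 0 (π/2)) Real.sin :=
    strictConcaveOn_sin_Icc.concaveOn.subset
      (Set.Icc_subset_Icc le_rfl (by linarith [pi_pos])) (convex_Icc _ _)
  have hmono : MonotoneOn Real.sin (Set.Icc 0 (π/2)) := by
    intro a ha b hb hab
    exact Real.strictMonoOn_sin.monotoneOn ⟨by linarith [ha.1, pi_pos], ha.2⟩
      ⟨by linarith [hb.1, pi_pos], hb.2⟩ hab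
  have hcomp : ConcaveOn ℝ (Set.Ici L) (Real.sin ∘ g) :=
    concaveOn_comp' hsin hgconc hmaps2 hmono
  refine hcomp.congr fun t ht => ?_
  simp only [Function.comp]
  rcases le_or_gt t U with htU | htU
  · have hle : ((t - L) / (U - L)) * (π / 2) ≤ π / 2 := by
      have h1' : (t - L) / (U - L) ≤ 1 := by
        rw [div_le_one hUL]; linarith
      nlinarith [pi_pos]
    rw [hg]
    simp only [min_eq_left hle]
    exact (h2 t ht htU).symm
  · have hge : π / 2 ≤ ((t - L) / (U - L)) * (π / 2) := by
      have h1' : (1:ℝ) ≤ (t - L) / (U - L) := by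
        rw [le_div_iff₀ hUL]; linarith
      nlinarith [pi_pos]
    rw [hg]
    simp only [min_eq_right hge]
    rw [Real.sin_pi_div_two]
    exact (h3 t htU.le).symm
end

section
/- Let a, d ∈ ℝⁿ have nonnegative components, let b be a real number and p > 0. Suppose x, y ∈ ℝⁿ satisfy 0 ≤ x ≤ y componentwise, a·x ≤ b ≤ (a + d)·x + p, and a·y ≤ b ≤ (a + d)·y + p. Then sin(((b − a·y)/(d·y + p))·(π/2)) ≤ sin(((b − a·x)/(d·x + p))·(π/2)); in other words, the trigonometric constraint membership function is monotonically decreasing with respect to the componentwise order on its middle region. -/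
open Real

theorem constraint_membership_antitone
    (n : ℕ) (a d : Fin n → ℝ) (ha : ∀ i, 0 ≤ a i) (hd : ∀ i, 0 ≤ d i)
    (b p : ℝ) (hp : 0 < p)
    (x y : Fin n → ℝ) (hx0 : ∀ i, 0 ≤ x i) (hxy : ∀ i, x i ≤ y i)
    (hx1 : ∑ i, a i * x i ≤ b) (hx2 : b ≤ ∑ i, (a i + d i) * x i + p)
    (hy1 : ∑ i, a i * y i ≤ b) (hy2 : b ≤ ∑ i, (a i + d i) * y i + p) :
    Real.sin (((b - ∑ i, a i * y i) / ((∑ i, d i * y i) + p)) * (π / 2)) ≤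
      Real.sin (((b - ∑ i, a i * x i) / ((∑ i, d i * x i) + p)) * (π / 2)) := by
  have hdx : (0:ℝ) ≤ ∑ i, d i * x i :=
    Finset.sum_nonneg fun i _ => mul_nonneg (hd i) (hx0 i)
  have hdy : (0:ℝ) ≤ ∑ i, d i * y i :=
    Finset.sum_nonneg fun i _ => mul_nonneg (hd i) (le_trans (hx0 i) (hxy i))
  have hDx : (0:ℝ) < (∑ i, d i * x i) + p := by linarith
  have hDy : (0:ℝ) < (∑ i, d i * y i) + p := by linarith
  have hax : (∑ i, a i * x i) ≤ ∑ i, a i * y i :=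
    Finset.sum_le_sum fun i _ => mul_le_mul_of_nonneg_left (hxy i) (ha i)
  have hdxy : (∑ i, d i * x i) ≤ ∑ i, d i * y i :=
    Finset.sum_le_sum fun i _ => mul_le_mul_of_nonneg_left (hxy i) (hd i)
  have hsplitx : ∑ i, (a i + d i) * x i = (∑ i, a i * x i) + ∑ i, d i * x i := by
    rw [← Finset.sum_add_distrib]; exact Finset.sum_congr rfl fun i _ => by ring
  set rY := (b - ∑ i, a i * y i) / ((∑ i, d i * y i) + p) with hrY
  set rX := (b - ∑ i, a i * x i) / ((∑ i, d i * x i) + p) with hrX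
  have hrY0 : 0 ≤ rY := div_nonneg (by linarith) hDy.le
  have hle : rY ≤ rX := by
    rw [hrY, hrX, div_le_div_iff₀ hDy hDx]
    nlinarith [mul_le_mul_of_nonneg_left hdxy (sub_nonneg.mpr hy1)]
  have hrX1 : rX ≤ 1 := by
    rw [hrX, div_le_one hDx]
    linarith [hsplitx]
  have hpi : (0:ℝ) < π / 2 := by positivity
  apply Real.strictMonoOn_sin.monotoneOn
  · constructor
    · nlinarith
    · nlinarith
  · constructor
    · nlinarith [mul_nonneg (le_trans hrY0 hle) hpi.le]
    · nlinarith
  · exact mul_le_mul_of_nonneg_right hle hpi.le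
end
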